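/- For every n ≥ 0, the cube hypergraph ℂₙ = {{1},{2},…,{n+1}} ∪ {{1,…,i} : 1 ≤ i ≤ n+1} on H = {1,…,n+1} is a connected contextual hypergraph. Moreover, for any p and any distinct i, j, x ∈ {1,…,p+1}, i and j lie in the same connected component of ℂ_p restricted to the complement of {x} if and only if i < x and j < x. -/

import Mathlib

open scoped Classical

noncomputable section

/-! ## Hypergraphs (nestohedra combinatorics), after Curien–Laplante-Anfossi:
hypergraphs, restrictions, connectivity, saturation, reconnected restriction,
constructs/constructions, the face order, the flip rewriting, and terms over the
associated signatures. -/

/-- A hypergraph on a finite vertex set: a finite set of nonempty hyperedges whose union is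
the vertex set, assumed atomic (every singleton is a hyperedge). -/
structure FHypergraph (α : Type*) [DecidableEq α] where
  verts : Finset α
  edges : Finset (Finset α)
  edges_nonempty : ∀ e ∈ edges, e.Nonempty
  edges_subset : ∀ e ∈ edges, e ⊆ verts
  atomic : ∀ v ∈ verts, {v} ∈ edges

namespace FHypergraph

variable {α : Type*} [DecidableEq α]

/-- The plain restriction `𝓗_X` of a hypergraph to a subset `X` of its vertices. -/
def restrict (H : FHypergraph α) (X : Finset α) : FHypergraph α where
  verts := X ∩ H.verts
  edges := H.edges.filter (· ⊆ X)
  edges_nonempty e he := H.edges_nonempty e (Finset.mem_filter.mp he).1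
  edges_subset e he :=
    Finset.subset_inter (Finset.mem_filter.mp he).2 (H.edges_subset e (Finset.mem_filter.mp he).1)
  atomic v hv := by
    rcases Finset.mem_inter.mp hv with ⟨h1, h2⟩
    exact Finset.mem_filter.mpr ⟨H.atomic v h2, Finset.singleton_subset_iff.mpr h1⟩

/-- A hypergraph is connected if its vertex set is nonempty and admits no nontrivial
partition `X₁ ∪ X₂` such that every edge lies in `X₁` or in `X₂`. -/
def Connected (H : FHypergraph α) : Prop :=
  H.verts.Nonempty ∧ ∀ X₁ X₂ : Finset α, X₁.Nonempty → X₂.Nonempty →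
    Disjoint X₁ X₂ → X₁ ∪ X₂ = H.verts → ∃ e ∈ H.edges, ¬e ⊆ X₁ ∧ ¬e ⊆ X₂

/-- `C` is (the vertex set of) a connected component of `H`: a maximal connected subset. -/
def IsComponent (H : FHypergraph α) (C : Finset α) : Prop :=
  C ⊆ H.verts ∧ (H.restrict C).Connected ∧
    ∀ D : Finset α, C ⊆ D → D ⊆ H.verts → (H.restrict D).Connected → D = C

/-- `y` and `z` lie in the same connected component of `H`. -/
def SameComponent (H : FHypergraph α) (y z : α) : Prop :=
  ∃ C : Finset α, H.IsComponent C ∧ y ∈ C ∧ z ∈ C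

/-- The saturation `Sat(𝓗)`: the set of (nonempty) connected subsets of vertices. -/
def sat (H : FHypergraph α) : Finset (Finset α) :=
  H.verts.powerset.filter fun X => (H.restrict X).Connected

theorem singleton_connected (H : FHypergraph α) {v : α} (hv : v ∈ H.verts) :
    (H.restrict {v}).Connected := by
  constructor
  · exact ⟨v, Finset.mem_inter.mpr ⟨Finset.mem_singleton_self v, hv⟩⟩
  · intro X₁ X₂ h₁ h₂ hd hu
    exfalso
    have hv' : ({v} : Finset α) ∩ H.verts = {v} :=
      Finset.inter_eq_left.mpr (Finset.singleton_subset_iff.mpr hv)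
    have hu' : X₁ ∪ X₂ = ({v} : Finset α) := hu.trans hv'
    have hX₁ : X₁ ⊆ {v} := hu' ▸ Finset.subset_union_left
    have hX₂ : X₂ ⊆ {v} := hu' ▸ Finset.subset_union_right
    obtain ⟨a, ha⟩ := h₁
    obtain ⟨b, hb⟩ := h₂
    have ha' := Finset.mem_singleton.mp (hX₁ ha)
    have hb' := Finset.mem_singleton.mp (hX₂ hb)
    subst ha'; exact Finset.disjoint_left.mp hd ha (hb' ▸ hb)

/-- The reconnected restriction `𝓗 ↾ X` of `𝓗` to `X`. -/
def reconRestrict (H : FHypergraph α) (X : Finset α) : FHypergraph α where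
  verts := X ∩ H.verts
  edges := (H.sat.image (· ∩ X)).filter (·.Nonempty)
  edges_nonempty e he := (Finset.mem_filter.mp he).2
  edges_subset := by
    intro e he
    rcases Finset.mem_image.mp (Finset.mem_filter.mp he).1 with ⟨Z, hZ, rfl⟩
    have hZv : Z ⊆ H.verts := Finset.mem_powerset.mp (Finset.mem_filter.mp hZ).1
    exact fun a ha => Finset.mem_inter.mpr
      ⟨(Finset.mem_inter.mp ha).2, hZv (Finset.mem_inter.mp ha).1⟩
  atomic := by
    intro v hv
    rcases Finset.mem_inter.mp hv with ⟨h1, h2⟩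
    refine Finset.mem_filter.mpr ⟨Finset.mem_image.mpr ⟨{v}, ?_, ?_⟩, ?_⟩
    · exact Finset.mem_filter.mpr
        ⟨Finset.mem_powerset.mpr (Finset.singleton_subset_iff.mpr h2),
         H.singleton_connected h2⟩
    · exact Finset.inter_eq_left.mpr (Finset.singleton_subset_iff.mpr h1)
    · exact ⟨v, by simp [Finset.inter_eq_left.mpr (Finset.singleton_subset_iff.mpr h1)]⟩

/-- `x ⇝ {y,z}` in `𝓗`: after removing `x`, the vertices `y` and `z` lie in the same
connected component.  Its negation is "`x` disconnects `y` and `z` in `𝓗`". -/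
def Links (H : FHypergraph α) (x y z : α) : Prop :=
  (H.restrict (H.verts \ {x})).SameComponent y z

/-- A hypergraph is contextual if for every connected subset `Y` of cardinality at least 3
and all distinct `x, y, z ∈ Y`, `x` disconnects `y` and `z` in `𝓗_Y` iff it does in `𝓗`. -/
def Contextual (H : FHypergraph α) : Prop :=
  ∀ Y : Finset α, Y ⊆ H.verts → (H.restrict Y).Connected → 3 ≤ Y.card →
    ∀ x y z : α, x ∈ Y → y ∈ Y → z ∈ Y → x ≠ y → y ≠ z → x ≠ z →
      ((H.restrict Y).Links x y z ↔ H.Links x y z)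

end FHypergraph

/-- Finite rooted trees with nodes decorated by finite sets (potential constructs). -/
inductive FTree (α : Type*) : Type _ where
  | node : Finset α → List (FTree α) → FTree α

namespace FTree

variable {α : Type*} [DecidableEq α]

/-- The decoration of the root node. -/
def label : FTree α → Finset α
  | node Y _ => Y

/-- The list of children of the root node. -/
def children : FTree α → List (FTree α)
  | node _ ts => ts

/-- The support of a tree: the union of the decorations of its nodes. -/
def support : FTree α → Finset α
  | node Y [] => Y
  | node Y (t :: ts) => support t ∪ support (node Y ts)

/-- The list of decorations of the nodes of a tree. -/
def labels : FTree α → List (Finset α)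
  | node Y [] => [Y]
  | node Y (t :: ts) => labels t ++ labels (node Y ts)

/-- The dimension of a construct: the sum over its nodes `X` of `|X| - 1`. -/
def dim (T : FTree α) : ℕ := (T.labels.map fun X => X.card - 1).sum

mutual
  /-- The (full) subtree rooted at the node decorated by `X`, if any. -/
  def subtreeAt : FTree α → Finset α → Option (FTree α)
    | node Y ts, X => if Y = X then some (node Y ts) else subtreeAtList ts X
  def subtreeAtList : List (FTree α) → Finset α → Option (FTree α)
    | [], _ => none
    | t :: ts, X => (subtreeAt t X).elim (subtreeAtList ts X) some
end

/-- The support `supp (T ↾ X)` of the subtree rooted at the node decorated by `X`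
(or `∅` if there is no such node). -/
def suppAt (T : FTree α) (X : Finset α) : Finset α :=
  ((T.subtreeAt X).map support).getD ∅

mutual
  /-- The list of supports of the subtrees rooted at the nodes of `T` (its nested set). -/
  def nests : FTree α → List (Finset α)
    | node Y ts => support (node Y ts) :: nestsList ts
  def nestsList : List (FTree α) → List (Finset α)
    | [] => []
    | t :: ts => nests t ++ nestsList ts
end

/-- The nested set of a tree, as a finite set. -/
def nestSet (T : FTree α) : Finset (Finset α) := T.nests.toFinset

/-- `S ≺ T` (`S` is covered by `T`) in the face order: `T` is obtained from `S` by
contracting one edge between a node and its father (equivalently, the nested set of `T`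
is obtained from that of `S` by removing one non-root element). -/
def CoveredBy (S T : FTree α) : Prop :=
  ∃ N ∈ S.nests, N ≠ S.support ∧ T.nestSet = S.nestSet.erase N

/-- The face (subface) order `S ≼ T` on constructs: the reflexive–transitive closure of
the covering relation `≺`. -/
def FaceLe (S T : FTree α) : Prop := Relation.ReflTransGen CoveredBy S T

/-- `IsSubtree S T`: `S` is a (full) subtree of `T`. -/
inductive IsSubtree : FTree α → FTree α → Prop
  | refl (t : FTree α) : IsSubtree t t
  | child {s t u : FTree α} : IsSubtree s t → t ∈ u.children → IsSubtree s u

/-- In `T`, the node decorated by `X` has a child decorated by `Y`. -/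
def ParentChild (X Y : Finset α) (T : FTree α) : Prop :=
  ∃ R : FTree α, IsSubtree R T ∧ R.label = X ∧ ∃ t ∈ R.children, t.label = Y

mutual
  /-- Pruning: remove all (subtrees rooted at) nodes whose decoration is not a subset
  of `X`, keeping the root. -/
  def prune (X : Finset α) : FTree α → FTree α
    | node Y ts => node Y (pruneList X ts)
  def pruneList (X : Finset α) : List (FTree α) → List (FTree α)
    | [] => []
    | t :: ts => if t.label ⊆ X then prune X t :: pruneList X ts else pruneList X ts
end

end FTree

/-- `IsConstruct H T`: the tree `T` is a construct of the hypergraph `H`: its root `Y` is a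
nonempty subset of the vertices, its children are constructs of the connected components of
`𝓗 ∖ Y` (one for each component, listed by increasing maximal vertex). -/
inductive IsConstruct {α : Type*} [LinearOrder α] : FHypergraph α → FTree α → Prop
  | node {H : FHypergraph α} (Y : Finset α) (ts : List (FTree α))
      (hY : Y.Nonempty) (hYsub : Y ⊆ H.verts)
      (hmem : ∀ t ∈ ts, (H.restrict (H.verts \ Y)).IsComponent t.support)
      (hcover : ∀ C : Finset α, (H.restrict (H.verts \ Y)).IsComponent C →
        ∃ t ∈ ts, t.support = C)
      (hsorted : ts.Pairwise fun a b => a.support.max < b.support.max)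
      (hchild : ∀ t ∈ ts, IsConstruct (H.restrict t.support) t) :
      IsConstruct H (FTree.node Y ts)

section ConstructionOrder

variable {α : Type*} [LinearOrder α]

/-- A construction: a construct all of whose nodes are singletons (a vertex of the
nestohedron). -/
def IsConstruction (H : FHypergraph α) (T : FTree α) : Prop :=
  IsConstruct H T ∧ ∀ X ∈ T.labels, X.card = 1

/-- An `X`-face: a 2-dimensional construct whose unique non-singleton node is decorated
by `X`, of cardinality 3. -/
def IsXFace (H : FHypergraph α) (X : Finset α) (T : FTree α) : Prop :=
  IsConstruct H T ∧ X.card = 3 ∧ X ∈ T.labels ∧ ∀ Y ∈ T.labels, Y ≠ X → Y.card = 1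

/-- Two distinct constructions are joined by an edge of the nestohedron: both are covered
by a common 1-dimensional construct. -/
def EdgeJoined (H : FHypergraph α) (S T : FTree α) : Prop :=
  IsConstruction H S ∧ IsConstruction H T ∧ S ≠ T ∧
  ∃ V : FTree α, IsConstruct H V ∧ V.dim = 1 ∧ FTree.CoveredBy S V ∧ FTree.CoveredBy T V

/-- The flip rewriting relation `S → T` on constructions of an ordered hypergraph:
`S` and `T` are the two endpoints of an edge whose 1-dimensional face has unique
non-singleton node `{x, y}` with `x < y`, and in `S` the node `{x}` is the parent of the
node `{y}`. -/
def Flip (H : FHypergraph α) (S T : FTree α) : Prop :=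
  IsConstruction H S ∧ IsConstruction H T ∧ S ≠ T ∧
  ∃ (V : FTree α) (x y : α), IsConstruct H V ∧ V.dim = 1 ∧ x ≠ y ∧
    ({x, y} : Finset α) ∈ V.labels ∧ FTree.CoveredBy S V ∧ FTree.CoveredBy T V ∧
    FTree.ParentChild ({x} : Finset α) ({y} : Finset α) S ∧ x < y

/-- The coordinate vector of a construction `S` of `H`:
`v^S_x = |{e ∈ Sat(𝓗) : x ∈ e ⊆ supp (S ↾ x)}|`. -/
def coordVec (H : FHypergraph α) (S : FTree α) (x : α) : ℕ :=
  (H.sat.filter fun e => x ∈ e ∧ e ⊆ S.suppAt {x}).card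

end ConstructionOrder

/-- Raw terms over the signature `Σ_𝓗` (and `Σ^c_𝓗`): variables are (connected) subsets,
function symbols are pairs `(X, Y)` of subsets, applied to a list of arguments. -/
inductive HTerm (α : Type*) : Type _ where
  | var : Finset α → HTerm α
  | app : Finset α → Finset α → List (HTerm α) → HTerm α

namespace HTerm

variable {α : Type*} [DecidableEq α]

/-- The (output) sort of a term. -/
def sortOf : HTerm α → Finset α
  | var A => A
  | app _ Y _ => Y

/-- The list of variables occurring in a term. -/
def varsList : HTerm α → List (Finset α)
  | var A => [A]
  | app _ _ [] => []
  | app X Y (t :: ts) => varsList t ++ varsList (app X Y ts)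

/-- The list of first components of the function symbols occurring in a term. -/
def appFirsts : HTerm α → List (Finset α)
  | var _ => []
  | app X _ [] => [X]
  | app X Y (t :: ts) => appFirsts t ++ appFirsts (app X Y ts)

/-- A term is closed if it contains no variables. -/
def Closed (t : HTerm α) : Prop := t.varsList = []

/-- The union `⋃ var(t)` of the variables of a term. -/
def varsUnion (t : HTerm α) : Finset α := t.varsList.foldr (· ∪ ·) ∅

mutual
  /-- Projection of a term to a decorated tree: every function symbol `(X, Y)` is sent to
  its first component `X`, and all variables are pruned. -/
  def toTree : HTerm α → FTree α
    | .var A => .node A []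
    | .app X _ ts => .node X (toTreeList ts)
  def toTreeList : List (HTerm α) → List (FTree α)
    | [] => []
    | .var _ :: ts => toTreeList ts
    | t :: ts => toTree t :: toTreeList ts
end

end HTerm

/-- Well-formed terms over the signature `Σ_𝓗` associated with the hypergraph `H`:
a variable is a connected subset (its own sort); a function symbol `(X, Y)` (with
`∅ ≠ X ⊆ Y ⊆ H` and `Y` connected) is applied to arguments whose sorts are exactly the
connected components of `𝓗_Y ∖ X`, listed by increasing maximal vertex. -/
inductive IsTerm {α : Type*} [LinearOrder α] (H : FHypergraph α) : HTerm α → Prop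
  | var (A : Finset α) : A ⊆ H.verts → (H.restrict A).Connected → IsTerm H (.var A)
  | app (X Y : Finset α) (ts : List (HTerm α)) :
      X.Nonempty → X ⊆ Y → Y ⊆ H.verts → (H.restrict Y).Connected →
      (∀ t ∈ ts, (H.restrict (Y \ X)).IsComponent t.sortOf) →
      (∀ C : Finset α, (H.restrict (Y \ X)).IsComponent C → ∃ t ∈ ts, t.sortOf = C) →
      ts.Pairwise (fun a b => a.sortOf.max < b.sortOf.max) →
      (∀ t ∈ ts, IsTerm H t) →
      IsTerm H (.app X Y ts)


/-- The cube hypergraph `ℂₙ` on `{1, …, n+1}`: all singletons together with the initial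
intervals `{1, …, i}` for `1 ≤ i ≤ n+1`. -/
def cubeH (n : ℕ) : FHypergraph ℕ where
  verts := Finset.Icc 1 (n + 1)
  edges := (Finset.Icc 1 (n + 1)).image (fun i => {i}) ∪
    (Finset.Icc 1 (n + 1)).image (fun i => Finset.Icc 1 i)
  edges_nonempty := by
    intro e he
    rcases Finset.mem_union.mp he with h | h
    · rcases Finset.mem_image.mp h with ⟨i, _, rfl⟩
      exact ⟨i, Finset.mem_singleton_self i⟩
    · rcases Finset.mem_image.mp h with ⟨i, hi, rfl⟩
      rw [Finset.mem_Icc] at hi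
      exact ⟨1, by rw [Finset.mem_Icc]; omega⟩
  edges_subset := by
    intro e he
    rcases Finset.mem_union.mp he with h | h
    · rcases Finset.mem_image.mp h with ⟨i, hi, rfl⟩
      exact Finset.singleton_subset_iff.mpr hi
    · rcases Finset.mem_image.mp h with ⟨i, hi, rfl⟩
      rw [Finset.mem_Icc] at hi
      exact Finset.Icc_subset_Icc_right hi.2
  atomic := fun v hv => Finset.mem_union_left _ (Finset.mem_image_of_mem _ hv)

namespace CubeAux

lemma hgext {α : Type*} [DecidableEq α] {H1 H2 : FHypergraph α}
    (hv : H1.verts = H2.verts) (he : H1.edges = H2.edges) : H1 = H2 := by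
  cases H1; cases H2; simp_all

lemma restrict_restrict {α : Type*} [DecidableEq α] (H : FHypergraph α) {Y C : Finset α}
    (h : C ⊆ Y) : (H.restrict Y).restrict C = H.restrict C := by
  apply hgext
  · show C ∩ (Y ∩ H.verts) = C ∩ H.verts
    ext a
    simp only [Finset.mem_inter]
    exact ⟨fun ⟨h1, _, h3⟩ => ⟨h1, h3⟩, fun ⟨h1, h2⟩ => ⟨h1, h h1, h2⟩⟩
  · show (H.edges.filter (· ⊆ Y)).filter (· ⊆ C) = H.edges.filter (· ⊆ C)
    rw [Finset.filter_filter]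
    refine Finset.filter_congr fun e _ => ?_
    constructor
    · exact fun h' => h'.2
    · exact fun h' => ⟨h'.trans h, h'⟩

lemma restrict_self {α : Type*} [DecidableEq α] (H : FHypergraph α) :
    H.restrict H.verts = H := by
  apply hgext
  · show H.verts ∩ H.verts = H.verts
    exact Finset.inter_self _
  · show H.edges.filter (· ⊆ H.verts) = H.edges
    exact Finset.filter_true_of_mem H.edges_subset

lemma cube_edges_mem {n : ℕ} {e : Finset ℕ} :
    e ∈ (cubeH n).edges ↔ (∃ i, i ∈ Finset.Icc 1 (n+1) ∧ e = {i}) ∨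
      (∃ i, i ∈ Finset.Icc 1 (n+1) ∧ e = Finset.Icc 1 i) := by
  simp [cubeH, eq_comm]

/-- Disconnection by a gap. -/
lemma not_conn_gap (n : ℕ) {X : Finset ℕ} (hX : X ⊆ Finset.Icc 1 (n+1)) {a b c : ℕ}
    (ha : a ∈ X) (hb : b ∈ X) (hc : c ∉ X) (hac : a < c) (hcb : c < b) :
    ¬ ((cubeH n).restrict X).Connected := by
  rintro ⟨-, h⟩
  have hverts : ((cubeH n).restrict X).verts = X := Finset.inter_eq_left.mpr hX
  obtain ⟨e, he, he1, he2⟩ := h (X.filter (· < c)) (X.filter fun t => ¬ t < c)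
    ⟨a, Finset.mem_filter.mpr ⟨ha, hac⟩⟩
    ⟨b, Finset.mem_filter.mpr ⟨hb, by omega⟩⟩
    (Finset.disjoint_filter_filter_not X X (· < c))
    (by rw [Finset.filter_union_filter_not_eq, hverts])
  rw [FHypergraph.restrict, Finset.mem_filter] at he
  obtain ⟨hee, heX⟩ := he
  rcases cube_edges_mem.mp hee with ⟨i, hi, rfl⟩ | ⟨i, hi, rfl⟩
  · have hiX : i ∈ X := heX (Finset.mem_singleton_self i)
    by_cases hic : i < c
    · refine he1 fun t ht => ?_
      rw [Finset.mem_singleton] at ht; subst ht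
      exact Finset.mem_filter.mpr ⟨hiX, hic⟩
    · refine he2 fun t ht => ?_
      rw [Finset.mem_singleton] at ht; subst ht
      exact Finset.mem_filter.mpr ⟨hiX, hic⟩
  · have hic : i < c := by
      by_contra hcon
      rw [Finset.mem_Icc] at hi
      exact hc (heX (Finset.mem_Icc.mpr ⟨by omega, by omega⟩))
    refine he1 fun t ht => ?_
    rw [Finset.mem_Icc] at ht
    exact Finset.mem_filter.mpr ⟨heX (Finset.mem_Icc.mpr ht), by omega⟩

/-- Disconnection when `1` is missing and there are two points. -/
lemma not_conn_no_one (n : ℕ) {X : Finset ℕ} (hX : X ⊆ Finset.Icc 1 (n+1)) (h1 : 1 ∉ X)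
    {a b : ℕ} (ha : a ∈ X) (hb : b ∈ X) (hab : a ≠ b) :
    ¬ ((cubeH n).restrict X).Connected := by
  rintro ⟨-, h⟩
  have hverts : ((cubeH n).restrict X).verts = X := Finset.inter_eq_left.mpr hX
  obtain ⟨e, he, he1, he2⟩ := h {a} (X.erase a)
    ⟨a, Finset.mem_singleton_self a⟩
    ⟨b, Finset.mem_erase.mpr ⟨fun hh => hab hh.symm, hb⟩⟩
    (by simp)
    (by rw [← Finset.insert_eq, Finset.insert_erase ha, hverts])
  rw [FHypergraph.restrict, Finset.mem_filter] at he
  obtain ⟨hee, heX⟩ := he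
  rcases cube_edges_mem.mp hee with ⟨i, hi, rfl⟩ | ⟨i, hi, rfl⟩
  · have hiX : i ∈ X := heX (Finset.mem_singleton_self i)
    by_cases hia : i = a
    · subst hia; exact he1 (Finset.Subset.refl _)
    · refine he2 fun t ht => ?_
      rw [Finset.mem_singleton] at ht; subst ht
      exact Finset.mem_erase.mpr ⟨hia, hiX⟩
  · rw [Finset.mem_Icc] at hi
    exact h1 (heX (Finset.mem_Icc.mpr ⟨le_refl 1, hi.1⟩))

/-- Initial intervals are connected. -/
lemma conn_interval (n m : ℕ) (h1 : 1 ≤ m) (h2 : m ≤ n + 1) :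
    ((cubeH n).restrict (Finset.Icc 1 m)).Connected := by
  have hsub : Finset.Icc 1 m ⊆ Finset.Icc 1 (n+1) := Finset.Icc_subset_Icc_right h2
  have hverts : ((cubeH n).restrict (Finset.Icc 1 m)).verts = Finset.Icc 1 m :=
    Finset.inter_eq_left.mpr hsub
  constructor
  · rw [hverts]; exact ⟨1, Finset.mem_Icc.mpr ⟨le_refl 1, h1⟩⟩
  · intro X₁ X₂ hn1 hn2 hd hu
    rw [hverts] at hu
    have key : ∀ A B : Finset ℕ, B.Nonempty → Disjoint A B → A ∪ B = Finset.Icc 1 m →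
        (1 : ℕ) ∈ A →
        ∃ e ∈ ((cubeH n).restrict (Finset.Icc 1 m)).edges, ¬ e ⊆ A ∧ ¬ e ⊆ B := by
      intro A B hBn hABd hABu h1A
      set k0 := B.min' hBn with hk0
      have hk0B : k0 ∈ B := B.min'_mem _
      have hk0m : k0 ∈ Finset.Icc 1 m := by rw [← hABu]; exact Finset.mem_union_right _ hk0B
      rw [Finset.mem_Icc] at hk0m
      refine ⟨Finset.Icc 1 k0, ?_, ?_, ?_⟩
      · refine Finset.mem_filter.mpr ⟨?_, Finset.Icc_subset_Icc_right hk0m.2⟩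
        exact cube_edges_mem.mpr (Or.inr ⟨k0, Finset.mem_Icc.mpr ⟨hk0m.1, by omega⟩, rfl⟩)
      · intro hcon
        exact Finset.disjoint_left.mp hABd
          (hcon (Finset.mem_Icc.mpr ⟨hk0m.1, le_refl k0⟩)) hk0B
      · intro hcon
        exact Finset.disjoint_left.mp hABd h1A
          (hcon (Finset.mem_Icc.mpr ⟨le_refl 1, hk0m.1⟩))
    have h1mem : (1 : ℕ) ∈ X₁ ∪ X₂ := by
      rw [hu]; exact Finset.mem_Icc.mpr ⟨le_refl 1, h1⟩
    rcases Finset.mem_union.mp h1mem with h1X | h1X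
    · exact key X₁ X₂ hn2 hd hu h1X
    · obtain ⟨e, he, he1, he2⟩ := key X₂ X₁ hn1 hd.symm (by rw [Finset.union_comm]; exact hu) h1X
      exact ⟨e, he, he2, he1⟩

/-- A connected subset with at least two elements is an initial interval. -/
lemma conn_eq_Icc (n : ℕ) {X : Finset ℕ} (hX : X ⊆ Finset.Icc 1 (n+1)) (h2 : 2 ≤ X.card)
    (hc : ((cubeH n).restrict X).Connected) :
    ∃ m, 2 ≤ m ∧ m ≤ n + 1 ∧ X = Finset.Icc 1 m := by
  obtain ⟨a, ha, b, hb, hab⟩ := Finset.one_lt_card.mp h2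
  have h1X : 1 ∈ X := by
    by_contra h1
    exact not_conn_no_one n hX h1 ha hb hab hc
  have hXne : X.Nonempty := ⟨1, h1X⟩
  set m := X.max' hXne with hm
  have hmX : m ∈ X := X.max'_mem hXne
  have hm2 : 2 ≤ m := by
    obtain ⟨c, hcX, hc1⟩ : ∃ c, c ∈ X ∧ c ≠ 1 := by
      rcases eq_or_ne a 1 with h | h
      · exact ⟨b, hb, by omega⟩
      · exact ⟨a, ha, h⟩
    have hc2 : c ∈ Finset.Icc 1 (n+1) := hX hcX
    rw [Finset.mem_Icc] at hc2
    have := X.le_max' c hcX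
    omega
  have hmle : m ≤ n + 1 := by
    have := hX hmX; rw [Finset.mem_Icc] at this; exact this.2
  refine ⟨m, hm2, hmle, Finset.Subset.antisymm ?_ ?_⟩
  · intro t ht
    have := hX ht; rw [Finset.mem_Icc] at this
    exact Finset.mem_Icc.mpr ⟨this.1, X.le_max' t ht⟩
  · intro t ht
    rw [Finset.mem_Icc] at ht
    by_contra htX
    have ht1 : 1 < t := by
      have hne : t ≠ 1 := fun hh => htX (hh ▸ h1X)
      omega
    have htm : t < m := by
      have hne : t ≠ m := fun hh => htX (hh ▸ hmX)
      omega
    exact not_conn_gap n hX h1X hmX htX ht1 htm hc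

/-- The key characterisation of connected components after removing `x`. -/
lemma sameComp_iff (n m x i j : ℕ) (hm : m ≤ n + 1)
    (hx : x ∈ Finset.Icc 1 m) (hi : i ∈ Finset.Icc 1 m) (hj : j ∈ Finset.Icc 1 m)
    (hij : i ≠ j) (hix : i ≠ x) (hjx : j ≠ x) :
    ((cubeH n).restrict (Finset.Icc 1 m \ {x})).SameComponent i j ↔ i < x ∧ j < x := by
  rw [Finset.mem_Icc] at hx hi hj
  set D := Finset.Icc 1 m \ {x} with hD
  have hmemD : ∀ t, t ∈ D ↔ 1 ≤ t ∧ t ≤ m ∧ t ≠ x := by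
    intro t
    rw [hD, Finset.mem_sdiff, Finset.mem_Icc, Finset.mem_singleton]
    tauto
  have hDsub : D ⊆ Finset.Icc 1 (n+1) := by
    intro t ht; rw [hmemD] at ht
    exact Finset.mem_Icc.mpr ⟨ht.1, by omega⟩
  have hDverts : ((cubeH n).restrict D).verts = D := Finset.inter_eq_left.mpr hDsub
  constructor
  · rintro ⟨C, ⟨hCsub, hCconn, -⟩, hiC, hjC⟩
    rw [hDverts] at hCsub
    rw [restrict_restrict _ hCsub] at hCconn
    have hCcard : 2 ≤ C.card := Finset.one_lt_card.mpr ⟨i, hiC, j, hjC, hij⟩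
    obtain ⟨m', hm'2, hm'le, rfl⟩ := conn_eq_Icc n (hCsub.trans hDsub) hCcard hCconn
    have hxm' : m' < x := by
      by_contra hcon
      have hxC : x ∈ D := hCsub (Finset.mem_Icc.mpr ⟨hx.1, by omega⟩)
      rw [hmemD] at hxC
      exact hxC.2.2 rfl
    rw [Finset.mem_Icc] at hiC hjC
    exact ⟨by omega, by omega⟩
  · rintro ⟨hixlt, hjxlt⟩
    have hx2 : 2 ≤ x := by omega
    have hCsubD : Finset.Icc 1 (x-1) ⊆ D := by
      intro t ht; rw [Finset.mem_Icc] at ht; rw [hmemD]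
      exact ⟨ht.1, by omega, by omega⟩
    refine ⟨Finset.Icc 1 (x-1), ⟨?_, ?_, ?_⟩, ?_, ?_⟩
    · rw [hDverts]; exact hCsubD
    · rw [restrict_restrict _ hCsubD]
      exact conn_interval n (x-1) (by omega) (by omega)
    · intro D' hCD' hD'sub hD'conn
      rw [hDverts] at hD'sub
      rw [restrict_restrict _ hD'sub] at hD'conn
      refine Finset.Subset.antisymm ?_ hCD'
      intro b hbD'
      rw [Finset.mem_Icc]
      by_contra hbC
      have hbD : b ∈ D := hD'sub hbD'
      rw [hmemD] at hbD
      have hbx : x < b := by omega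
      have haD' : x - 1 ∈ D' := hCD' (Finset.mem_Icc.mpr ⟨by omega, le_refl _⟩)
      have hxD' : x ∉ D' := fun hh => by
        have := hD'sub hh; rw [hmemD] at this; exact this.2.2 rfl
      exact not_conn_gap n (hD'sub.trans hDsub) haD' hbD' hxD' (by omega) hbx hD'conn
    · exact Finset.mem_Icc.mpr ⟨hi.1, by omega⟩
    · exact Finset.mem_Icc.mpr ⟨hj.1, by omega⟩

end CubeAux

/-- Theorem `thm:examples` (b).  Every cube hypergraph `ℂₙ` is a
connected contextual hypergraph; moreover, for distinct `i, j, x ∈ {1, …, p+1}`, the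
vertices `i` and `j` lie in the same connected component of `ℂ_p ∖ {x}` iff `i < x` and
`j < x`. -/
theorem stmt16 :
    (∀ n : ℕ, (cubeH n).Connected ∧ (cubeH n).Contextual) ∧
    ∀ p i j x : ℕ, i ∈ Finset.Icc 1 (p + 1) → j ∈ Finset.Icc 1 (p + 1) →
      x ∈ Finset.Icc 1 (p + 1) → i ≠ j → i ≠ x → j ≠ x →
      ((cubeH p).Links x i j ↔ i < x ∧ j < x) := by
  constructor
  · intro n
    constructor
    · rw [← CubeAux.restrict_self (cubeH n)]
      exact CubeAux.conn_interval n (n+1) (by omega) (le_refl _)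
    · intro Y hYsub hYconn hYcard x y z hxY hyY hzY hxy hyz hxz
      obtain ⟨m, hm2, hmle, rfl⟩ := CubeAux.conn_eq_Icc n hYsub (by omega) hYconn
      have hYverts : ((cubeH n).restrict (Finset.Icc 1 m)).verts = Finset.Icc 1 m :=
        Finset.inter_eq_left.mpr hYsub
      unfold FHypergraph.Links
      rw [hYverts, CubeAux.restrict_restrict _ Finset.sdiff_subset]
      rw [CubeAux.sameComp_iff n m x y z hmle hxY hyY hzY hyz hxy.symm hxz.symm]
      have hverts : (cubeH n).verts = Finset.Icc 1 (n+1) := rfl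
      rw [hverts,
        CubeAux.sameComp_iff n (n+1) x y z (le_refl _) (hYsub hxY) (hYsub hyY) (hYsub hzY)
          hyz hxy.symm hxz.symm]
  · intro p i j x hi hj hx hij hix hjx
    unfold FHypergraph.Links
    have hverts : (cubeH p).verts = Finset.Icc 1 (p+1) := rfl
    rw [hverts]
    exact CubeAux.sameComp_iff p (p+1) x i j (le_refl _) hx hi hj hij hix hjx


end
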